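/- Let π_1,…,π_n be permutation words on {1,…,m} such that LCS(π_i,π_j) ≤ r for all i ≠ j, and suppose m > (n−1)·r. Then in every run of immediate-scheduler steps on π_1,…,π_n (from any initial configuration), each player advances at most m−1 times, i.e., no π_i is ever fully traversed; in particular every run is finite and π_1,…,π_n constitute a winning strategy for the MC(n,m) game. -/

import Mathlib

theorem map_getD_sublist {α : Type*} (d : α) :
    ∀ (l : List α) (is : List ℕ), is.Pairwise (· < ·) → (∀ k ∈ is, k < l.length) →
      (is.map (fun k => l.getD k d)).Sublist l := by
  intro l
  induction l with
  | nil =>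
    intro is _ hb
    cases is with
    | nil => simp
    | cons k rest => exact absurd (hb k (by simp)) (by simp)
  | cons a l' ih =>
    intro is hp hb
    cases is with
    | nil => simp
    | cons k rest =>
      rcases Nat.eq_zero_or_pos k with rfl | hk
      · have hrest : ∀ j ∈ rest, 0 < j := (List.pairwise_cons.mp hp).1
        have heq : rest.map (fun j => (a :: l').getD j d)
            = (rest.map (fun j => j - 1)).map (fun j => l'.getD j d) := by
          rw [List.map_map]
          refine List.map_congr_left ?_
          intro j hj
          have := hrest j hj
          obtain ⟨j', rfl⟩ : ∃ j', j = j' + 1 := ⟨j - 1, by omega⟩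
          simp
        simp only [List.map_cons, List.getD_cons_zero]
        refine List.Sublist.cons₂ a ?_
        rw [heq]
        refine ih _ ?_ ?_
        · rw [List.pairwise_map]
          refine (List.pairwise_cons.mp hp).2.imp_of_mem ?_
          intro x y hx hy hxy
          have := hrest x hx; have := hrest y hy; omega
        · intro x hx
          simp only [List.mem_map] at hx
          obtain ⟨j, hj, rfl⟩ := hx
          have h1 := hrest j hj
          have h2 := hb j (by simp [hj])
          simp at h2 ⊢; omega
      · have hrest : ∀ j ∈ k :: rest, 0 < j := by
          intro j hj
          rcases List.mem_cons.mp hj with rfl | hj'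
          · exact hk
          · exact lt_trans hk ((List.pairwise_cons.mp hp).1 j hj')
        have heq : (k :: rest).map (fun j => (a :: l').getD j d)
            = ((k :: rest).map (fun j => j - 1)).map (fun j => l'.getD j d) := by
          rw [List.map_map]
          refine List.map_congr_left ?_
          intro j hj
          have := hrest j hj
          obtain ⟨j', rfl⟩ : ∃ j', j = j' + 1 := ⟨j - 1, by omega⟩
          simp
        rw [heq]
        refine List.Sublist.cons a ?_
        refine ih _ ?_ ?_
        · rw [List.pairwise_map]
          refine hp.imp_of_mem ?_
          intro x y hx hy hxy
          have := hrest x hx; have := hrest y hy; omega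
        · intro x hx
          simp only [List.mem_map] at hx
          obtain ⟨j, hj, rfl⟩ := hx
          have h1 := hrest j hj
          have h2 := hb j hj
          simp at h2 ⊢; omega

/-- A step of the immediate scheduler in the cyclically-traversed Musical Chairs game. -/
def MCStep {n m : ℕ} (π : Fin n → List (Fin m))
    (c c' : ∀ i, Fin (π i).length) : Prop :=
  ∃ S : Finset (Fin n), S.Nonempty ∧
    (∀ i ∈ S, ∃ j, j ≠ i ∧ (π j).get (c j) = (π i).get (c i)) ∧
    (∀ i ∈ S, ((c' i : ℕ) = ((c i : ℕ) + 1) % (π i).length)) ∧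
    (∀ i ∉ S, c' i = c i)

/-- number of advances of player `p` before time `t` -/
def mcCount {n m : ℕ} {π : Fin n → List (Fin m)} (f : ℕ → ∀ i, Fin (π i).length)
    (p : Fin n) (t : ℕ) : ℕ :=
  ((Finset.range t).filter (fun s => f (s + 1) p ≠ f s p)).card

lemma mcCount_zero {n m : ℕ} {π : Fin n → List (Fin m)} (f : ℕ → ∀ i, Fin (π i).length)
    (p : Fin n) : mcCount f p 0 = 0 := by simp [mcCount]

lemma mcCount_succ {n m : ℕ} {π : Fin n → List (Fin m)} (f : ℕ → ∀ i, Fin (π i).length)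
    (p : Fin n) (t : ℕ) :
    mcCount f p (t + 1) = if f (t + 1) p ≠ f t p then mcCount f p t + 1 else mcCount f p t := by
  unfold mcCount
  rw [Finset.range_add_one, Finset.filter_insert]
  split
  · rw [Finset.card_insert_of_notMem (by simp)]
  · rfl

lemma mcCount_mono {n m : ℕ} {π : Fin n → List (Fin m)} (f : ℕ → ∀ i, Fin (π i).length)
    (p : Fin n) {s t : ℕ} (h : s ≤ t) : mcCount f p s ≤ mcCount f p t :=
  Finset.card_le_card (Finset.filter_subset_filter _ (Finset.range_subset_range.mpr h))

/-- the position invariant -/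
lemma mcPos {n m : ℕ} {π : Fin n → List (Fin m)} (hlen : ∀ p, (π p).length = m)
    (f : ℕ → ∀ i, Fin (π i).length) (T : ℕ)
    (hrun : ∀ t, t < T → MCStep π (f t) (f (t + 1))) (p : Fin n) :
    ∀ t, t ≤ T → ((f t p : ℕ)) = (((f 0 p : ℕ)) + mcCount f p t) % m := by
  intro t
  induction t with
  | zero =>
    intro _
    rw [mcCount_zero, Nat.add_zero, Nat.mod_eq_of_lt (Nat.lt_of_lt_of_eq (f 0 p).isLt (hlen p))]
  | succ t ih =>
    intro ht
    have ih' := ih (by omega)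
    by_cases hne : f (t + 1) p = f t p
    · rw [mcCount_succ, if_neg (by simpa using hne), hne, ih']
    · obtain ⟨S, _, _, hadv, hfix⟩ := hrun t (by omega)
      have hpS : p ∈ S := by
        by_contra h
        exact hne (hfix p h)
      have h1 : ((f (t + 1) p : ℕ)) = ((f t p : ℕ) + 1) % m :=
        (hadv p hpS).trans (congrArg (fun k => ((f t p : ℕ) + 1) % k) (hlen p))
      rw [h1, ih', Nat.mod_add_mod, mcCount_succ, if_pos hne, ← Nat.add_assoc]

lemma nat_cancel {m p0 a b : ℕ} (ha : a < m) (hb : b < m)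
    (h : (p0 + a) % m = (p0 + b) % m) : a = b := by
  have h2 : a ≡ b [MOD m] := Nat.ModEq.add_left_cancel' p0 h
  rwa [Nat.ModEq, Nat.mod_eq_of_lt ha, Nat.mod_eq_of_lt hb] at h2

theorem mc_core (n m r : ℕ) (π : Fin n → List (Fin m))
    (hperm : ∀ i, (π i).Perm (List.finRange m))
    (hLCS : ∀ i j : Fin n, i ≠ j → ∀ (r₁ r₂ : ℕ) (l : List (Fin m)),
      l.Sublist ((π i).rotate r₁) → l.Sublist ((π j).rotate r₂) → l.length ≤ r)
    (hm : (n - 1) * r < m)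
    (f : ℕ → ∀ i, Fin (π i).length) (T : ℕ)
    (hrun : ∀ t, t < T → MCStep π (f t) (f (t + 1))) (i : Fin n) :
    mcCount f i T ≤ m - 1 := by
  classical
  have hlen : ∀ p, (π p).length = m := fun p =>
    (hperm p).length_eq.trans (List.length_finRange (n := m))
  have hm0 : 0 < m := Nat.lt_of_lt_of_eq (f 0 i).pos (hlen i)
  have hpos := mcPos hlen f T hrun
  by_contra hcon
  have hAm : m ≤ mcCount f i T := by omega
  -- minimal time at which some player completes m advances
  have hex : ∃ t, ∃ p, m ≤ mcCount f p t := ⟨T, i, hAm⟩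
  obtain ⟨i₀, hi₀⟩ := Nat.find_spec hex
  set t0 := Nat.find hex with ht0def
  have hmin : ∀ s, s < t0 → ∀ p, mcCount f p s < m := by
    intro s hs p
    have := Nat.find_min hex hs
    push_neg at this
    exact this p
  have ht0T : t0 ≤ T := Nat.find_le ⟨i, hAm⟩
  have ht0pos : 0 < t0 := by
    rcases Nat.eq_zero_or_pos t0 with h | h
    · rw [h] at hi₀; rw [mcCount_zero] at hi₀; omega
    · exact h
  have hAeq : mcCount f i₀ t0 = m := by
    obtain ⟨s0, hs0⟩ : ∃ s0, t0 = s0 + 1 := ⟨t0 - 1, by omega⟩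
    have h1 := hmin s0 (by omega) i₀
    have h2 : mcCount f i₀ (s0 + 1) ≤ mcCount f i₀ s0 + 1 := by
      rw [mcCount_succ]; split <;> omega
    rw [hs0] at hi₀ ⊢
    omega
  set M : Finset ℕ := (Finset.range t0).filter (fun t => f (t + 1) i₀ ≠ f t i₀) with hMdef
  have hMcard : M.card = m := hAeq
  have hMlt : ∀ t ∈ M, t < t0 := by
    intro t ht; rw [hMdef, Finset.mem_filter, Finset.mem_range] at ht; exact ht.1
  have hMmov : ∀ t ∈ M, f (t + 1) i₀ ≠ f t i₀ := by
    intro t ht; rw [hMdef, Finset.mem_filter] at ht; exact ht.2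
  have hstep : ∀ t : ℕ, ∃ j, t ∈ M →
      j ≠ i₀ ∧ (π j).get (f t j) = (π i₀).get (f t i₀) := by
    intro t
    by_cases ht : t ∈ M
    · obtain ⟨S, _, hconf, hadv, hfix⟩ := hrun t (lt_of_lt_of_le (hMlt t ht) ht0T)
      have hiS : i₀ ∈ S := by
        by_contra h
        exact hMmov t ht (hfix i₀ h)
      obtain ⟨j, hj⟩ := hconf i₀ hiS
      exact ⟨j, fun _ => hj⟩
    · exact ⟨i₀, fun h => absurd h ht⟩
  choose g hg using hstep
  -- pigeonhole
  have hmaps : ∀ t ∈ M, g t ∈ Finset.univ.erase i₀ := fun t ht =>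
    Finset.mem_erase.mpr ⟨(hg t ht).1, Finset.mem_univ _⟩
  have hcard : (Finset.univ.erase i₀).card * r < M.card := by
    rw [Finset.card_erase_of_mem (Finset.mem_univ _), Finset.card_univ, Fintype.card_fin,
      hMcard]
    exact hm
  obtain ⟨j, hjmem, hjcard⟩ :=
    Finset.exists_lt_card_fiber_of_mul_lt_card_of_maps_to hmaps hcard
  have hji : j ≠ i₀ := (Finset.mem_erase.mp hjmem).1
  set B : Finset ℕ := M.filter (fun t => g t = j) with hBdef
  set LB : List ℕ := B.sort (· ≤ ·) with hLBdef
  have hsort : LB.Pairwise (· < ·) := (Finset.sortedLT_sort B).pairwise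
  have hmemB : ∀ t ∈ LB, t ∈ B := fun t ht => (Finset.mem_sort _).mp ht
  have hlenLB : LB.length = B.card := Finset.length_sort _
  have hBM : ∀ t ∈ B, t ∈ M := by
    intro t ht; rw [hBdef, Finset.mem_filter] at ht; exact ht.1
  have hBg : ∀ t ∈ B, g t = j := by
    intro t ht; rw [hBdef, Finset.mem_filter] at ht; exact ht.2
  have hBlt : ∀ t ∈ B, t < t0 := fun t ht => hMlt t (hBM t ht)
  have hBT : ∀ t ∈ B, t ≤ T := fun t ht => le_of_lt (lt_of_lt_of_le (hBlt t ht) ht0T)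
  have hchair : ∀ t ∈ B, (π j).get (f t j) = (π i₀).get (f t i₀) := by
    intro t ht
    have h2 := (hg t (hBM t ht)).2
    rw [hBg t ht] at h2
    exact h2
  have hbnd : ∀ p : Fin n, ∀ t ∈ B, mcCount f p t < m := fun p t ht =>
    hmin t (hBlt t ht) p
  -- strict monotonicity of counts along B for i₀
  have hAi : ∀ t ∈ B, ∀ t' ∈ B, t < t' → mcCount f i₀ t < mcCount f i₀ t' := by
    intro t ht t' ht' htt
    have h1 : mcCount f i₀ (t + 1) = mcCount f i₀ t + 1 := by
      rw [mcCount_succ, if_pos (hMmov t (hBM t ht))]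
    have h2 : mcCount f i₀ (t + 1) ≤ mcCount f i₀ t' := mcCount_mono f i₀ (by omega)
    omega
  -- the positions of i₀ at times of B are distinct
  have hnodup : (π i₀).Nodup := ((hperm i₀).nodup_iff).mpr (List.nodup_finRange m)
  have hχ : ∀ t ∈ B, ∀ t' ∈ B, t < t' →
      (π i₀).get (f t i₀) ≠ (π i₀).get (f t' i₀) := by
    intro t ht t' ht' htt
    have hfne : f t i₀ ≠ f t' i₀ := by
      intro hEq
      have h1 := hpos i₀ t (hBT t ht)
      have h2 := hpos i₀ t' (hBT t' ht')
      have : ((f 0 i₀ : ℕ) + mcCount f i₀ t) % m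
          = ((f 0 i₀ : ℕ) + mcCount f i₀ t') % m := by
        rw [← h1, ← h2, hEq]
      have := nat_cancel (hbnd i₀ t ht) (hbnd i₀ t' ht') this
      have := hAi t ht t' ht' htt
      omega
    exact fun h => hfne ((List.Nodup.get_inj_iff hnodup).mp h)
  -- strict monotonicity of counts along B for j
  have hAj : ∀ t ∈ B, ∀ t' ∈ B, t < t' → mcCount f j t < mcCount f j t' := by
    intro t ht t' ht' htt
    have hle : mcCount f j t ≤ mcCount f j t' := mcCount_mono f j (le_of_lt htt)
    rcases Nat.lt_or_ge (mcCount f j t) (mcCount f j t') with h | h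
    · exact h
    · exfalso
      have hEq : mcCount f j t = mcCount f j t' := by omega
      have h1 := hpos j t (hBT t ht)
      have h2 := hpos j t' (hBT t' ht')
      have hfj : f t j = f t' j := by
        apply Fin.ext
        rw [h1, h2, hEq]
      have := hχ t ht t' ht' htt
      rw [← hchair t ht, ← hchair t' ht', hfj] at this
      exact this rfl
  -- the common word
  set lc : List (Fin m) := LB.map (fun t => (π i₀).get (f t i₀)) with hlcdef
  have hsub : ∀ p : Fin n,
      (∀ t ∈ B, (π p).get (f t p) = (π i₀).get (f t i₀)) →
      (∀ t ∈ B, ∀ t' ∈ B, t < t' → mcCount f p t < mcCount f p t') →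
      lc.Sublist ((π p).rotate ((f 0 p : ℕ))) := by
    intro p hch hstrict
    set w : List (Fin m) := (π p).rotate ((f 0 p : ℕ)) with hwdef
    have hlw : w.length = m := by rw [hwdef, List.length_rotate, hlen]
    have heq : lc = (LB.map (mcCount f p)).map (fun k => w.getD k ⟨0, hm0⟩) := by
      rw [List.map_map, hlcdef]
      refine (List.map_congr_left ?_).symm
      intro t htLB
      have htB := hmemB t htLB
      have hb := hbnd p t htB
      simp only [Function.comp]
      rw [List.getD_eq_getElem _ _ (by rw [hlw]; exact hb)]
      have hget := List.get_rotate (π p) ((f 0 p : ℕ)) ⟨mcCount f p t, by rw [hlw]; exact hb⟩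
      have hgetElem : w[mcCount f p t]'(by rw [hlw]; exact hb)
          = w.get ⟨mcCount f p t, by rw [hlw]; exact hb⟩ := rfl
      rw [hgetElem, hget, ← hch t htB]
      congr 1
      apply Fin.ext
      show (mcCount f p t + (f 0 p : ℕ)) % (π p).length = ((f t p : ℕ))
      rw [hpos p t (hBT t htB)]
      conv_lhs => rw [Nat.add_comm]
      simp only [hlen p]
    rw [heq]
    apply map_getD_sublist
    · rw [List.pairwise_map]
      exact hsort.imp_of_mem (fun {a b} ha hb hab =>
        hstrict a (hmemB a ha) b (hmemB b hb) hab)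
    · intro k hk
      rw [List.mem_map] at hk
      obtain ⟨t, ht, rfl⟩ := hk
      rw [hlw]
      exact hbnd p t (hmemB t ht)
  have hs1 := hsub i₀ (fun t _ => rfl) hAi
  have hs2 := hsub j hchair hAj
  have hfinal := hLCS i₀ j (Ne.symm hji) _ _ lc hs1 hs2
  have : lc.length = B.card := by rw [hlcdef, List.length_map, hlenLB]
  omega

/-- The words constitute a winning strategy: there is no infinite run of steps. -/
def MCWinning {n m : ℕ} (π : Fin n → List (Fin m)) : Prop :=
  ¬ ∃ f : ℕ → (∀ i, Fin (π i).length), ∀ t, MCStep π (f t) (f (t + 1))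

/-- A word over the alphabet `Fin m` is full if every letter occurs in it. -/
def MCFull {m : ℕ} (l : List (Fin m)) : Prop := ∀ a : Fin m, a ∈ l

/-- If `π₁,…,π_n` are permutation words on `m` chairs with pairwise cyclic LCS at most
`r` (every common sublist of any cyclic rotations of two distinct words has length
`≤ r`), and `m > (n-1)·r`, then in every run no word is fully traversed: each player
advances at most `m - 1` times; in particular the words are a winning strategy. -/
theorem stmt_17 (n m r : ℕ) (π : Fin n → List (Fin m))
    (hperm : ∀ i, (π i).Perm (List.finRange m))
    (hLCS : ∀ i j : Fin n, i ≠ j → ∀ (r₁ r₂ : ℕ) (l : List (Fin m)),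
      l.Sublist ((π i).rotate r₁) → l.Sublist ((π j).rotate r₂) → l.length ≤ r)
    (hm : (n - 1) * r < m) :
    (∀ (f : ℕ → ∀ i, Fin (π i).length) (T : ℕ),
      (∀ t, t < T → MCStep π (f t) (f (t + 1))) →
      ∀ i, ((Finset.range T).filter (fun t => f (t + 1) i ≠ f t i)).card ≤ m - 1) ∧
    MCWinning π := by
  have hlen : ∀ p : Fin n, (π p).length = m := fun p =>
    (hperm p).length_eq.trans (List.length_finRange (n := m))
  have part1 : ∀ (f : ℕ → ∀ i, Fin (π i).length) (T : ℕ),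
      (∀ t, t < T → MCStep π (f t) (f (t + 1))) →
      ∀ i, ((Finset.range T).filter (fun t => f (t + 1) i ≠ f t i)).card ≤ m - 1 :=
    fun f T hrun i => mc_core n m r π hperm hLCS hm f T hrun i
  refine ⟨part1, ?_⟩
  rintro ⟨f, hf⟩
  -- basic bounds
  obtain ⟨S0, ⟨i0, hi0⟩, hconf0, _, _⟩ := hf 0
  obtain ⟨j0, hj0, hch0⟩ := hconf0 i0 hi0
  have hr1 : 1 ≤ r := by
    have h1 : [(π i0).get (f 0 i0)].Sublist ((π i0).rotate 0) := by
      rw [List.rotate_zero, List.singleton_sublist]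
      exact List.get_mem _ _
    have h2 : [(π i0).get (f 0 i0)].Sublist ((π j0).rotate 0) := by
      rw [List.rotate_zero, List.singleton_sublist, ← hch0]
      exact List.get_mem _ _
    simpa using hLCS i0 j0 (Ne.symm hj0) 0 0 _ h1 h2
  have hn2 : 2 ≤ n := by
    have h1 : (j0 : ℕ) ≠ (i0 : ℕ) := fun h => hj0 (Fin.ext h)
    have h2 := j0.isLt
    have h3 := i0.isLt
    omega
  have hm2 : 2 ≤ m := by
    have h1 : 1 * 1 ≤ (n - 1) * r := Nat.mul_le_mul (by omega) hr1
    omega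
  -- each step moves at least one player
  have hmovesome : ∀ t, ∃ p, f (t + 1) p ≠ f t p := by
    intro t
    obtain ⟨S, ⟨p, hp⟩, _, hadv, _⟩ := hf t
    refine ⟨p, fun heq => ?_⟩
    have h0 := hadv p hp
    rw [heq] at h0
    have h1 : ((f t p : ℕ)) = ((f t p : ℕ) + 1) % m :=
      h0.trans (congrArg (fun k => ((f t p : ℕ) + 1) % k) (hlen p))
    have h2 : (f t p : ℕ) < m := Nat.lt_of_lt_of_eq (f t p).isLt (hlen p)
    rcases Nat.lt_or_ge ((f t p : ℕ) + 1) m with h | h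
    · rw [Nat.mod_eq_of_lt h] at h1; omega
    · have h3 : (f t p : ℕ) + 1 = m := by omega
      rw [h3, Nat.mod_self] at h1
      omega
  set T := n * (m - 1) + 1 with hTdef
  have hbound := part1 f T (fun t _ => hf t)
  have hsum : T ≤ ∑ p : Fin n,
      ((Finset.range T).filter (fun t => f (t + 1) p ≠ f t p)).card := by
    have step1 : T = ∑ _t ∈ Finset.range T, 1 := by simp
    have step2 : ∑ _t ∈ Finset.range T, 1 ≤
        ∑ t ∈ Finset.range T, ∑ p : Fin n, (if f (t + 1) p ≠ f t p then 1 else 0) := by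
      refine Finset.sum_le_sum ?_
      intro t _
      obtain ⟨p, hp⟩ := hmovesome t
      have h1 := Finset.single_le_sum
        (f := fun q => if f (t + 1) q ≠ f t q then (1 : ℕ) else 0)
        (fun _ _ => Nat.zero_le _) (Finset.mem_univ p)
      simpa [hp] using h1
    have step3 : ∑ t ∈ Finset.range T, ∑ p : Fin n, (if f (t + 1) p ≠ f t p then 1 else 0)
        = ∑ p : Fin n, ((Finset.range T).filter (fun t => f (t + 1) p ≠ f t p)).card := by
      rw [Finset.sum_comm]
      exact Finset.sum_congr rfl (fun p _ => (Finset.card_filter _ _).symm)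
    omega
  have hub : ∑ p : Fin n,
      ((Finset.range T).filter (fun t => f (t + 1) p ≠ f t p)).card ≤ n * (m - 1) := by
    calc ∑ p : Fin n, ((Finset.range T).filter (fun t => f (t + 1) p ≠ f t p)).card
        ≤ ∑ _p : Fin n, (m - 1) := Finset.sum_le_sum (fun p _ => hbound p)
      _ = n * (m - 1) := by simp [Finset.sum_const, Finset.card_univ, mul_comm]
  omega
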